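/- Every cubic polynomial v ∈ P₃ satisfies the four linear relations defining the space W*_K: (1/a)·∫₀ᵃ (∂v/∂y)(x,0)·(2x−a)/a dx = (1/6)·((∂v/∂y)(a,0) − (∂v/∂y)(0,0)); (1/a)·∫₀ᵃ (∂v/∂y)(x,b)·(2x−a)/a dx = (1/6)·((∂v/∂y)(a,b) − (∂v/∂y)(0,b)); (1/b)·∫₀ᵇ (∂v/∂x)(a,y)·(2y−b)/b dy = (1/6)·((∂v/∂x)(a,b) − (∂v/∂x)(a,0)); and (1/b)·∫₀ᵇ (∂v/∂x)(0,y)·(2y−b)/b dy = (1/6)·((∂v/∂x)(0,b) − (∂v/∂x)(0,0)). (Consequently P₃(K) ⊂ W*_K.) -/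

import Mathlib

open MvPolynomial

/-- Integral of a quadratic against the normalized odd linear weight. -/
lemma quadInt (a c0 c1 c2 : ℝ) (ha : a ≠ 0) :
    (1 / a) * (∫ x in (0:ℝ)..a, (c0 + c1 * x + c2 * x ^ 2) * ((2 * x - a) / a)) =
      (1 / 6) * ((c0 + c1 * a + c2 * a ^ 2) - (c0 + c1 * 0 + c2 * 0 ^ 2)) := by
  obtain ⟨k4, k3, k2, k1, hk4, hk3, hk2, hk1⟩ :
      ∃ k4 k3 k2 k1 : ℝ, k4 = c2 / (2 * a) ∧ k3 = (2 * c1 - a * c2) / (3 * a) ∧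
        k2 = (2 * c0 - a * c1) / (2 * a) ∧ k1 = -c0 := ⟨_, _, _, _, rfl, rfl, rfl, rfl⟩
  have hF : ∀ x : ℝ, HasDerivAt (fun x : ℝ => k4 * x ^ 4 + k3 * x ^ 3 + k2 * x ^ 2 + k1 * x)
      ((c0 + c1 * x + c2 * x ^ 2) * ((2 * x - a) / a)) x := by
    intro x
    have h : HasDerivAt (fun x : ℝ => k4 * x ^ 4 + k3 * x ^ 3 + k2 * x ^ 2 + k1 * x)
        (k4 * (4 * x ^ 3) + k3 * (3 * x ^ 2) + k2 * (2 * x) + k1 * 1) x := by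
      have h4 := (hasDerivAt_pow 4 x).const_mul k4
      have h3 := (hasDerivAt_pow 3 x).const_mul k3
      have h2 := (hasDerivAt_pow 2 x).const_mul k2
      have h1 := (hasDerivAt_id x).const_mul k1
      norm_num at h4 h3 h2 h1
      rw [mul_one]
      exact ((h4.add h3).add h2).add h1
    convert h using 1
    rw [hk4, hk3, hk2, hk1]
    field_simp
    ring
  have hint : IntervalIntegrable (fun x : ℝ => (c0 + c1 * x + c2 * x ^ 2) * ((2 * x - a) / a))
      MeasureTheory.volume 0 a := by
    apply Continuous.intervalIntegrable
    fun_prop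
  rw [intervalIntegral.integral_eq_sub_of_hasDerivAt (fun x _ => hF x) hint]
  rw [hk4, hk3, hk2, hk1]
  field_simp
  ring

/-- A partial derivative decreases the total degree by at least one. -/
lemma td_pderiv {d : ℕ} (i : Fin 2) (p : MvPolynomial (Fin 2) ℝ)
    (h : p.totalDegree ≤ d + 1) : (pderiv i p).totalDegree ≤ d := by
  classical
  conv_lhs => rw [p.as_sum]
  rw [map_sum]
  refine (totalDegree_finset_sum _ _).trans (Finset.sup_le fun m hm => ?_)
  rw [pderiv_monomial]
  rcases Nat.eq_zero_or_pos (m i) with h0 | h0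
  · simp [h0]
  · refine (totalDegree_monomial_le _ _).trans ?_
    have hsum : (m - Finsupp.single i 1) + Finsupp.single i 1 = m := by
      ext j
      simp only [Finsupp.coe_add, Finsupp.coe_tsub, Pi.add_apply, Pi.sub_apply,
        Finsupp.single_apply]
      by_cases hj : i = j
      · subst hj; norm_num; omega
      · simp [hj]
    have h2 : m.sum (fun _ e => e) ≤ d + 1 := (le_totalDegree hm).trans h
    have h3 : ((m - Finsupp.single i 1) + Finsupp.single i 1).sum (fun _ e => e)
        = (m - Finsupp.single i 1).sum (fun _ e => e) + 1 := by
      rw [Finsupp.sum_add_index (by simp) (by simp)]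
      simp
    rw [hsum] at h3
    show (m - Finsupp.single i 1).sum (fun _ e => e) ≤ d
    omega

/-- Restriction to a horizontal edge of a polynomial of total degree ≤ 2 is a quadratic. -/
lemma edge0 (p : MvPolynomial (Fin 2) ℝ) (h : p.totalDegree ≤ 2) (t : ℝ) :
    ∃ c0 c1 c2 : ℝ, ∀ x : ℝ, eval ![x, t] p = c0 + c1 * x + c2 * x ^ 2 := by
  set q : Polynomial ℝ := Polynomial.map (eval ![t]) (finSuccEquiv ℝ 1 p) with hq
  refine ⟨q.coeff 0, q.coeff 1, q.coeff 2, fun x => ?_⟩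
  have hx : (![x, t] : Fin 2 → ℝ) = Fin.cons x ![t] := by
    ext j; fin_cases j <;> simp
  rw [hx, eval_eq_eval_mv_eval', ← hq]
  have hdeg : q.natDegree < 3 := by
    have h1 : q.natDegree ≤ (finSuccEquiv ℝ 1 p).natDegree := Polynomial.natDegree_map_le
    rw [natDegree_finSuccEquiv] at h1
    have h2 := degreeOf_le_totalDegree p 0
    omega
  rw [Polynomial.eval_eq_sum_range' hdeg]
  simp [Finset.sum_range_succ]

/-- Restriction to a vertical edge of a polynomial of total degree ≤ 2 is a quadratic. -/
lemma edge1 (p : MvPolynomial (Fin 2) ℝ) (h : p.totalDegree ≤ 2) (t : ℝ) :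
    ∃ c0 c1 c2 : ℝ, ∀ y : ℝ, eval ![t, y] p = c0 + c1 * y + c2 * y ^ 2 := by
  obtain ⟨c0, c1, c2, hc⟩ := edge0 (rename (Equiv.swap 0 1) p)
    ((totalDegree_rename_le _ _).trans h) t
  refine ⟨c0, c1, c2, fun y => ?_⟩
  have := hc y
  rw [eval_rename] at this
  have hfun : (![y, t] : Fin 2 → ℝ) ∘ (Equiv.swap (0 : Fin 2) 1) = ![t, y] := by
    ext j; fin_cases j <;> simp [Equiv.swap_apply_def]
  rwa [hfun] at this

theorem stmt15 (a b : ℝ) (ha : 0 < a) (hb : 0 < b)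
    (v : MvPolynomial (Fin 2) ℝ) (hv : v.totalDegree ≤ 3) :
    (1 / a) * (∫ x in (0:ℝ)..a, eval ![x, 0] (pderiv 1 v) * ((2 * x - a) / a)) =
      (1 / 6) * (eval ![a, (0:ℝ)] (pderiv 1 v) - eval ![(0:ℝ), (0:ℝ)] (pderiv 1 v)) ∧
    (1 / a) * (∫ x in (0:ℝ)..a, eval ![x, b] (pderiv 1 v) * ((2 * x - a) / a)) =
      (1 / 6) * (eval ![a, b] (pderiv 1 v) - eval ![(0:ℝ), b] (pderiv 1 v)) ∧
    (1 / b) * (∫ y in (0:ℝ)..b, eval ![a, y] (pderiv 0 v) * ((2 * y - b) / b)) =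
      (1 / 6) * (eval ![a, b] (pderiv 0 v) - eval ![a, (0:ℝ)] (pderiv 0 v)) ∧
    (1 / b) * (∫ y in (0:ℝ)..b, eval ![(0:ℝ), y] (pderiv 0 v) * ((2 * y - b) / b)) =
      (1 / 6) * (eval ![(0:ℝ), b] (pderiv 0 v) - eval ![(0:ℝ), (0:ℝ)] (pderiv 0 v)) := by
  have hd1 : (pderiv 1 v).totalDegree ≤ 2 := td_pderiv 1 v hv
  have hd0 : (pderiv 0 v).totalDegree ≤ 2 := td_pderiv 0 v hv
  refine ⟨?_, ?_, ?_, ?_⟩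
  · obtain ⟨c0, c1, c2, hc⟩ := edge0 (pderiv 1 v) hd1 0
    rw [intervalIntegral.integral_congr (g := fun x => (c0 + c1 * x + c2 * x ^ 2) * ((2 * x - a) / a)) (fun x _ => by rw [hc x]), hc a, hc 0]
    simpa using quadInt a c0 c1 c2 ha.ne'
  · obtain ⟨c0, c1, c2, hc⟩ := edge0 (pderiv 1 v) hd1 b
    rw [intervalIntegral.integral_congr (g := fun x => (c0 + c1 * x + c2 * x ^ 2) * ((2 * x - a) / a)) (fun x _ => by rw [hc x]), hc a, hc 0]
    simpa using quadInt a c0 c1 c2 ha.ne'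
  · obtain ⟨c0, c1, c2, hc⟩ := edge1 (pderiv 0 v) hd0 a
    rw [intervalIntegral.integral_congr (g := fun y => (c0 + c1 * y + c2 * y ^ 2) * ((2 * y - b) / b)) (fun y _ => by rw [hc y]), hc b, hc 0]
    simpa using quadInt b c0 c1 c2 hb.ne'
  · obtain ⟨c0, c1, c2, hc⟩ := edge1 (pderiv 0 v) hd0 0
    rw [intervalIntegral.integral_congr (g := fun y => (c0 + c1 * y + c2 * y ^ 2) * ((2 * y - b) / b)) (fun y _ => by rw [hc y]), hc b, hc 0]
    simpa using quadInt b c0 c1 c2 hb.ne'
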